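/- Let L be the combinatorial Laplacian of a weighted graph G on N vertices, C ∈ ℝ^{n×N} a coarsening matrix with Π = Cᵀ C, and L̃ = C L Cᵀ. Suppose λ_1 = 0, Π x_1 = x_1, C x_1 = x̃_1, and fix k with 2 ≤ k ≤ n − 1 and constants ε_2,…,ε_k ≥ 0 such that x_iᵀ Π L Π x_i ≤ (1 + ε_i) λ_i for all 2 ≤ i ≤ k. If λ̃_{k+1} > λ_2, then the quantity ϑ_k := Σ_{i=1}^{k} Σ_{j=k+1}^{n} (x̃_jᵀ C x_i)² satisfies ϑ_k ≤ Σ_{i=2}^{k} ( (1 + ε_i) λ_i − λ_2 ‖Π x_i‖₂² ) / ( λ̃_{k+1} − λ_2 ). -/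

import Mathlib

open Matrix

/-- The combinatorial Laplacian `L = D - W`. -/
def lap {N : ℕ} (W : Matrix (Fin N) (Fin N) ℝ) : Matrix (Fin N) (Fin N) ℝ :=
  Matrix.diagonal (fun i => ∑ j, W i j) - W

/-- `W` is the weight matrix of a weighted graph: symmetric, nonnegative, zero diagonal. -/
def IsWeightedGraph {N : ℕ} (W : Matrix (Fin N) (Fin N) ℝ) : Prop :=
  (∀ i j, W i j = W j i) ∧ (∀ i j, 0 ≤ W i j) ∧ (∀ i, W i i = 0)

/-- A coarsening matrix `C : ℝ^{n×N}`. -/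
def IsCoarsening {n N : ℕ} (C : Matrix (Fin n) (Fin N) ℝ) : Prop :=
  ∃ φ : Fin N → Fin n, Function.Surjective φ ∧
    ∀ i j, C i j =
      if φ j = i then
        (Real.sqrt ((Finset.univ.filter (fun j' : Fin N => φ j' = i)).card : ℝ))⁻¹
      else 0

lemma mulVec_dot {m k : ℕ} (A : Matrix (Fin m) (Fin k) ℝ) (u : Fin k → ℝ) (w : Fin m → ℝ) :
    (A *ᵥ u) ⬝ᵥ w = u ⬝ᵥ (Aᵀ *ᵥ w) := by
  rw [Matrix.mulVec_transpose, dotProduct_comm, Matrix.dotProduct_mulVec, dotProduct_comm]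

lemma dot_mulVec' {m k : ℕ} (A : Matrix (Fin m) (Fin k) ℝ) (u : Fin m → ℝ) (z : Fin k → ℝ) :
    u ⬝ᵥ (A *ᵥ z) = (Aᵀ *ᵥ u) ⬝ᵥ z := by
  rw [dotProduct_comm, mulVec_dot, dotProduct_comm]

lemma ortho_complete {m : ℕ} (u : Fin m → Fin m → ℝ)
    (h : ∀ i j, u i ⬝ᵥ u j = if i = j then (1:ℝ) else 0) (v w : Fin m → ℝ) :
    ∑ j, (u j ⬝ᵥ v) * (u j ⬝ᵥ w) = v ⬝ᵥ w := by
  set X : Matrix (Fin m) (Fin m) ℝ := Matrix.of u with hX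
  have hXX : X * Xᵀ = 1 := by
    ext i j
    simpa [Matrix.mul_apply, Matrix.one_apply, dotProduct, X] using h i j
  have hXT : Xᵀ * X = 1 := mul_eq_one_comm.mp hXX
  calc ∑ j, (u j ⬝ᵥ v) * (u j ⬝ᵥ w) = (X *ᵥ v) ⬝ᵥ (X *ᵥ w) := rfl
    _ = ((X *ᵥ v) ᵥ* X) ⬝ᵥ w := Matrix.dotProduct_mulVec _ _ _
    _ = ((v ᵥ* Xᵀ) ᵥ* X) ⬝ᵥ w := by rw [Matrix.vecMul_transpose]
    _ = (v ᵥ* (Xᵀ * X)) ⬝ᵥ w := by rw [Matrix.vecMul_vecMul]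
    _ = v ⬝ᵥ w := by rw [hXT, Matrix.vecMul_one]

lemma ortho_complete_sq {m : ℕ} (u : Fin m → Fin m → ℝ)
    (h : ∀ i j, u i ⬝ᵥ u j = if i = j then (1:ℝ) else 0) (v : Fin m → ℝ) :
    ∑ j, (u j ⬝ᵥ v)^2 = v ⬝ᵥ v := by
  rw [← ortho_complete u h v v]
  exact Finset.sum_congr rfl fun j _ => sq (u j ⬝ᵥ v) ▸ by ring

lemma ortho_weighted {m : ℕ} (u : Fin m → Fin m → ℝ) (μ : Fin m → ℝ)
    (h : ∀ i j, u i ⬝ᵥ u j = if i = j then (1:ℝ) else 0)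
    (M : Matrix (Fin m) (Fin m) ℝ) (hM : Mᵀ = M)
    (heig : ∀ i, M *ᵥ u i = μ i • u i) (v : Fin m → ℝ) :
    ∑ j, μ j * (u j ⬝ᵥ v)^2 = v ⬝ᵥ (M *ᵥ v) := by
  rw [← ortho_complete u h v (M *ᵥ v)]
  apply Finset.sum_congr rfl
  intro j _
  have h1 : u j ⬝ᵥ (M *ᵥ v) = μ j * (u j ⬝ᵥ v) := by
    rw [dot_mulVec', hM, heig, smul_dotProduct, smul_eq_mul]
  rw [h1]; ring

theorem coarsening_sin_theta_bound_two {n N : ℕ} (hn : n ≤ N)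
    (W : Matrix (Fin N) (Fin N) ℝ) (hW : IsWeightedGraph W)
    (C : Matrix (Fin n) (Fin N) ℝ) (hC : IsCoarsening C)
    (lam : Fin N → ℝ) (x : Fin N → Fin N → ℝ)
    (hmono : Monotone lam)
    (hortho : ∀ i j, x i ⬝ᵥ x j = if i = j then (1 : ℝ) else 0)
    (heig : ∀ i, lap W *ᵥ x i = lam i • x i)
    (lamt : Fin n → ℝ) (xt : Fin n → Fin n → ℝ)
    (hmonot : Monotone lamt)
    (horthot : ∀ i j, xt i ⬝ᵥ xt j = if i = j then (1 : ℝ) else 0)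
    (heigt : ∀ i, (C * lap W * Cᵀ) *ᵥ xt i = lamt i • xt i)
    (kk : ℕ) (hkk : 1 ≤ kk) (hkn : kk + 2 ≤ n)
    (h0 : lam ⟨0, by omega⟩ = 0)
    (hfix : (Cᵀ * C) *ᵥ x ⟨0, by omega⟩ = x ⟨0, by omega⟩)
    (hCx1 : C *ᵥ x ⟨0, by omega⟩ = xt ⟨0, by omega⟩)
    (eps : Fin N → ℝ)
    (heps : ∀ i : Fin N, 1 ≤ (i : ℕ) → (i : ℕ) ≤ kk → 0 ≤ eps i)
    (hrss : ∀ i : Fin N, 1 ≤ (i : ℕ) → (i : ℕ) ≤ kk →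
      ((Cᵀ * C) *ᵥ x i) ⬝ᵥ (lap W *ᵥ ((Cᵀ * C) *ᵥ x i)) ≤ (1 + eps i) * lam i)
    (hgap : lam ⟨1, by omega⟩ < lamt ⟨kk + 1, by omega⟩) :
    (∑ i ∈ Finset.univ.filter (fun i : Fin N => (i : ℕ) ≤ kk),
        ∑ j ∈ Finset.univ.filter (fun j : Fin n => kk < (j : ℕ)),
          (xt j ⬝ᵥ (C *ᵥ x i)) ^ 2)
      ≤ ∑ i ∈ Finset.univ.filter (fun i : Fin N => 1 ≤ (i : ℕ) ∧ (i : ℕ) ≤ kk),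
          ((1 + eps i) * lam i -
            lam ⟨1, by omega⟩ * (((Cᵀ * C) *ᵥ x i) ⬝ᵥ ((Cᵀ * C) *ᵥ x i))) /
          (lamt ⟨kk + 1, by omega⟩ - lam ⟨1, by omega⟩) := by
  obtain ⟨hWs, hWnn, hWd⟩ := hW
  -- symmetry of L and of C L Cᵀ
  have hLs : (lap W)ᵀ = lap W := by
    unfold lap
    rw [Matrix.transpose_sub, Matrix.diagonal_transpose]
    congr 1
    ext i j
    exact hWs j i
  have hMs : (C * lap W * Cᵀ)ᵀ = C * lap W * Cᵀ := by
    rw [Matrix.transpose_mul, Matrix.transpose_mul, Matrix.transpose_transpose, hLs,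
      Matrix.mul_assoc]
  -- C Cᵀ = 1
  have hCC : C * Cᵀ = 1 := by
    obtain ⟨φ, hsurj, hCd⟩ := hC
    ext a b
    simp only [Matrix.mul_apply, Matrix.transpose_apply, Matrix.one_apply]
    rcases eq_or_ne a b with h | h
    · subst h
      rw [if_pos rfl]
      have hpos : 0 < ((Finset.univ.filter (fun j' : Fin N => φ j' = a)).card : ℝ) := by
        obtain ⟨j, hj⟩ := hsurj a
        exact_mod_cast Finset.card_pos.mpr ⟨j, by simp [hj]⟩
      have hsum : ∑ j, C a j * C a j
          = ∑ j ∈ Finset.univ.filter (fun j' : Fin N => φ j' = a),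
              (((Finset.univ.filter (fun j' : Fin N => φ j' = a)).card : ℝ))⁻¹ := by
        rw [Finset.sum_filter]
        apply Finset.sum_congr rfl
        intro j _
        rw [hCd a j]
        by_cases hj : φ j = a
        · rw [if_pos hj, if_pos hj, ← mul_inv, Real.mul_self_sqrt hpos.le]
        · simp [hj]
      rw [hsum, Finset.sum_const, nsmul_eq_mul, mul_inv_cancel₀ hpos.ne']
    · rw [if_neg h]
      apply Finset.sum_eq_zero
      intro j _
      rw [hCd a j, hCd b j]
      by_cases h1 : φ j = a
      · by_cases h2 : φ j = b
        · exact absurd (h1.symm.trans h2) h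
        · simp [h2]
      · simp [h1]
  have hPiT : (Cᵀ * C)ᵀ = Cᵀ * C := by
    rw [Matrix.transpose_mul, Matrix.transpose_transpose]
  have hgap' : (0:ℝ) < lamt ⟨kk + 1, by omega⟩ - lam ⟨1, by omega⟩ := sub_pos.mpr hgap
  -- second eigenvalue bound: lamt j ≥ lam₂ for j ≥ 1
  have hlamt_ge : ∀ j : Fin n, 1 ≤ (j : ℕ) → lam ⟨1, by omega⟩ ≤ lamt j := by
    intro j hj
    set w : Fin N → ℝ := Cᵀ *ᵥ xt j with hw
    have hj0 : (⟨0, by omega⟩ : Fin n) ≠ j := by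
      intro h
      have : (0:ℕ) = (j:ℕ) := congrArg Fin.val h
      omega
    have ha0 : x ⟨0, by omega⟩ ⬝ᵥ w = 0 := by
      rw [hw, ← mulVec_dot C (x ⟨0, by omega⟩) (xt j), hCx1, horthot]
      rw [if_neg hj0]
    have hnorm : w ⬝ᵥ w = 1 := by
      rw [hw, mulVec_dot Cᵀ (xt j) (Cᵀ *ᵥ xt j), Matrix.transpose_transpose,
        Matrix.mulVec_mulVec, hCC, Matrix.one_mulVec, horthot, if_pos rfl]
    have hq : lamt j = w ⬝ᵥ (lap W *ᵥ w) := by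
      have h1 : xt j ⬝ᵥ ((C * lap W * Cᵀ) *ᵥ xt j) = lamt j := by
        rw [heigt j, dotProduct_smul, smul_eq_mul, horthot, if_pos rfl, mul_one]
      rw [hw, mulVec_dot Cᵀ (xt j), Matrix.transpose_transpose, Matrix.mulVec_mulVec,
        Matrix.mulVec_mulVec]
      exact h1.symm
    have hexp : w ⬝ᵥ (lap W *ᵥ w) = ∑ i, lam i * (x i ⬝ᵥ w)^2 :=
      (ortho_weighted x lam hortho (lap W) hLs heig w).symm
    have hsum2 : ∑ i, (x i ⬝ᵥ w)^2 = 1 := by rw [ortho_complete_sq x hortho w, hnorm]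
    have hbound : lam ⟨1, by omega⟩ * 1 ≤ ∑ i, lam i * (x i ⬝ᵥ w)^2 := by
      rw [← hsum2, Finset.mul_sum]
      apply Finset.sum_le_sum
      intro i _
      rcases Nat.eq_zero_or_pos (i : ℕ) with h | h
      · have : i = ⟨0, by omega⟩ := Fin.ext h
        rw [this, ha0]
        simp
      · have : lam ⟨1, by omega⟩ ≤ lam i := hmono (Fin.le_def.mpr (show 1 ≤ (i:ℕ) by omega))
        exact mul_le_mul_of_nonneg_right this (sq_nonneg _)
    rw [hq, hexp]
    linarith
  -- the coefficient on xt₀ vanishes for i ≥ 1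
  have hc0 : ∀ i : Fin N, 1 ≤ (i : ℕ) → xt ⟨0, by omega⟩ ⬝ᵥ (C *ᵥ x i) = 0 := by
    intro i hi
    have hne : (⟨0, by omega⟩ : Fin N) ≠ i := by
      intro h
      have : (0:ℕ) = (i:ℕ) := congrArg Fin.val h
      omega
    rw [← hCx1, mulVec_dot C (x ⟨0, by omega⟩) (C *ᵥ x i), Matrix.mulVec_mulVec,
      dot_mulVec' (Cᵀ*C) (x ⟨0, by omega⟩) (x i), hPiT, hfix, hortho, if_neg hne]
  -- per-index bound
  have hper : ∀ i : Fin N, 1 ≤ (i : ℕ) → (i : ℕ) ≤ kk →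
      (∑ j ∈ Finset.univ.filter (fun j : Fin n => kk < (j : ℕ)), (xt j ⬝ᵥ (C *ᵥ x i)) ^ 2)
        ≤ ((1 + eps i) * lam i -
            lam ⟨1, by omega⟩ * (((Cᵀ * C) *ᵥ x i) ⬝ᵥ ((Cᵀ * C) *ᵥ x i))) /
          (lamt ⟨kk + 1, by omega⟩ - lam ⟨1, by omega⟩) := by
    intro i hi1 hi2
    set v : Fin n → ℝ := C *ᵥ x i with hv
    set lam2 : ℝ := lam ⟨1, by omega⟩ with hlam2
    -- quadratic form identity
    have hS : ∑ j, lamt j * (xt j ⬝ᵥ v)^2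
        = ((Cᵀ * C) *ᵥ x i) ⬝ᵥ (lap W *ᵥ ((Cᵀ * C) *ᵥ x i)) := by
      rw [ortho_weighted xt lamt horthot (C * lap W * Cᵀ) hMs heigt v, hv]
      rw [Matrix.mulVec_mulVec, mulVec_dot C (x i) _, Matrix.mulVec_mulVec]
      rw [Matrix.mulVec_mulVec, mulVec_dot (Cᵀ * C) (x i) _, Matrix.mulVec_mulVec, hPiT]
      congr 2
      simp [Matrix.mul_assoc]
    have hB : ∑ j, (xt j ⬝ᵥ v)^2
        = ((Cᵀ * C) *ᵥ x i) ⬝ᵥ ((Cᵀ * C) *ᵥ x i) := by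
      rw [ortho_complete_sq xt horthot v, hv]
      rw [mulVec_dot C (x i) _, Matrix.mulVec_mulVec]
      rw [mulVec_dot (Cᵀ * C) (x i) _, hPiT, Matrix.mulVec_mulVec]
      congr 2
      rw [Matrix.mul_assoc, ← Matrix.mul_assoc C Cᵀ C, hCC, Matrix.one_mul]
    -- main chain
    have hchain : (lamt ⟨kk + 1, by omega⟩ - lam2) *
        (∑ j ∈ Finset.univ.filter (fun j : Fin n => kk < (j : ℕ)), (xt j ⬝ᵥ v) ^ 2)
        ≤ ∑ j, (lamt j - lam2) * (xt j ⬝ᵥ v)^2 := by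
      rw [Finset.mul_sum]
      calc ∑ j ∈ Finset.univ.filter (fun j : Fin n => kk < (j : ℕ)),
              (lamt ⟨kk + 1, by omega⟩ - lam2) * (xt j ⬝ᵥ v) ^ 2
          ≤ ∑ j ∈ Finset.univ.filter (fun j : Fin n => kk < (j : ℕ)),
              (lamt j - lam2) * (xt j ⬝ᵥ v)^2 := by
            apply Finset.sum_le_sum
            intro j hj
            simp only [Finset.mem_filter] at hj
            have : lamt ⟨kk + 1, by omega⟩ ≤ lamt j := hmonot (by simp [Fin.le_def]; omega)
            exact mul_le_mul_of_nonneg_right (by linarith) (sq_nonneg _)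
        _ ≤ ∑ j, (lamt j - lam2) * (xt j ⬝ᵥ v)^2 := by
            apply Finset.sum_le_sum_of_subset_of_nonneg (Finset.filter_subset _ _)
            intro j _ hj
            simp only [Finset.mem_filter, Finset.mem_univ, true_and, not_lt] at hj
            rcases Nat.eq_zero_or_pos (j : ℕ) with h | h
            · have hj0 : j = ⟨0, by omega⟩ := Fin.ext h
              rw [hj0, hv, hc0 i hi1]
              simp
            · have : lam2 ≤ lamt j := hlamt_ge j h
              exact mul_nonneg (by linarith) (sq_nonneg _)
    have hsplit : ∑ j, (lamt j - lam2) * (xt j ⬝ᵥ v)^2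
        = (∑ j, lamt j * (xt j ⬝ᵥ v)^2) - lam2 * ∑ j, (xt j ⬝ᵥ v)^2 := by
      rw [Finset.mul_sum, ← Finset.sum_sub_distrib]
      apply Finset.sum_congr rfl
      intro j _
      ring
    rw [le_div_iff₀ hgap']
    have hrssi := hrss i hi1 hi2
    calc (∑ j ∈ Finset.univ.filter (fun j : Fin n => kk < (j : ℕ)), (xt j ⬝ᵥ v) ^ 2) *
            (lamt ⟨kk + 1, by omega⟩ - lam2)
        = (lamt ⟨kk + 1, by omega⟩ - lam2) *
            (∑ j ∈ Finset.univ.filter (fun j : Fin n => kk < (j : ℕ)), (xt j ⬝ᵥ v) ^ 2) := by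
          ring
      _ ≤ ∑ j, (lamt j - lam2) * (xt j ⬝ᵥ v)^2 := hchain
      _ = (∑ j, lamt j * (xt j ⬝ᵥ v)^2) - lam2 * ∑ j, (xt j ⬝ᵥ v)^2 := hsplit
      _ ≤ (1 + eps i) * lam i - lam2 * (((Cᵀ * C) *ᵥ x i) ⬝ᵥ ((Cᵀ * C) *ᵥ x i)) := by
          rw [hB, hS]
          linarith
  -- assemble
  have hsub : (Finset.univ.filter (fun i : Fin N => 1 ≤ (i : ℕ) ∧ (i : ℕ) ≤ kk))
      ⊆ (Finset.univ.filter (fun i : Fin N => (i : ℕ) ≤ kk)) := by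
    intro i hi
    simp only [Finset.mem_filter] at hi ⊢
    exact ⟨hi.1, hi.2.2⟩
  have hzero : ∀ i ∈ Finset.univ.filter (fun i : Fin N => (i : ℕ) ≤ kk),
      i ∉ Finset.univ.filter (fun i : Fin N => 1 ≤ (i : ℕ) ∧ (i : ℕ) ≤ kk) →
      (∑ j ∈ Finset.univ.filter (fun j : Fin n => kk < (j : ℕ)),
        (xt j ⬝ᵥ (C *ᵥ x i)) ^ 2) = 0 := by
    intro i hi hni
    simp only [Finset.mem_filter, Finset.mem_univ, true_and, not_and, not_le] at hi hni
    have hv0 : (i : ℕ) = 0 := by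
      rcases Nat.eq_zero_or_pos (i : ℕ) with h | h
      · exact h
      · exact absurd (hni h) (by omega)
    have hi0 : i = ⟨0, by omega⟩ := Fin.ext (by simpa using hv0)
    apply Finset.sum_eq_zero
    intro j hj
    simp only [Finset.mem_filter, Finset.mem_univ, true_and] at hj
    have hne : j ≠ ⟨0, by omega⟩ := by
      intro h
      have : (j:ℕ) = 0 := congrArg Fin.val h
      omega
    rw [hi0, hCx1, horthot, if_neg hne]
    norm_num
  rw [← Finset.sum_subset hsub hzero]
  apply Finset.sum_le_sum
  intro i hi
  simp only [Finset.mem_filter, Finset.mem_univ, true_and] at hi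
  exact hper i hi.1 hi.2
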